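/- The curve γ is a unit-speed curve on S³ (i.e. ‖γ(s)‖ = 1 and ‖γ'(s)‖ = 1 for all s), and its first curvature scalar (geodesic curvature) with respect to S³ is constant: for all s, ‖γ''(s) + γ(s)‖ = |α² − β²| sin η₀ cos η₀ / p². (Here γ''(s) + γ(s) is the covariant derivative DT/ds on S³ of the unit tangent T = γ', since DT/ds = T' − ⟨T',γ⟩γ = γ'' + γ.) -/

import Mathlib

open Real

/-- The curve `γ(s) = (sin η₀ cos(αs/p), sin η₀ sin(αs/p), cos η₀ cos(βs/p), cos η₀ sin(βs/p))`
(a curve on the Clifford torus in `S³` in Hopf coordinates, with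
`p = √(α² sin²η₀ + β² cos²η₀)`) is a unit-speed curve on `S³` with constant geodesic
curvature `‖γ'' + γ‖ = |α² − β²| sin η₀ cos η₀ / p²` with respect to `S³`. -/
theorem hopf_curve_unit_speed_and_constant_curvature
    (η₀ α β : ℝ) (hη₀ : η₀ ∈ Set.Ioo 0 (Real.pi / 2)) (hαβ : ¬(α = 0 ∧ β = 0))
    (p : ℝ) (hp : p = Real.sqrt (α ^ 2 * Real.sin η₀ ^ 2 + β ^ 2 * Real.cos η₀ ^ 2))
    (γ : ℝ → EuclideanSpace ℝ (Fin 4))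
    (hγ : ∀ s, γ s = ![Real.sin η₀ * Real.cos (α * s / p), Real.sin η₀ * Real.sin (α * s / p),
        Real.cos η₀ * Real.cos (β * s / p), Real.cos η₀ * Real.sin (β * s / p)]) :
    (∀ s, ‖γ s‖ = 1) ∧ (∀ s, ‖deriv γ s‖ = 1) ∧
      (∀ s, ‖deriv (deriv γ) s + γ s‖
        = |α ^ 2 - β ^ 2| * Real.sin η₀ * Real.cos η₀ / p ^ 2) := by
  obtain ⟨hη1, hη2⟩ := hη₀
  have hπ := Real.pi_pos
  have hs : 0 < Real.sin η₀ := Real.sin_pos_of_pos_of_lt_pi hη1 (by linarith)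
  have hc : 0 < Real.cos η₀ := Real.cos_pos_of_mem_Ioo ⟨by linarith, hη2⟩
  have hppos : 0 < p := by
    rw [hp]
    apply Real.sqrt_pos.mpr
    rcases not_and_or.mp hαβ with h | h
    · have h1 : 0 < α ^ 2 * Real.sin η₀ ^ 2 := by positivity
      nlinarith [sq_nonneg (β * Real.cos η₀)]
    · have h1 : 0 < β ^ 2 * Real.cos η₀ ^ 2 := by positivity
      nlinarith [sq_nonneg (α * Real.sin η₀)]
  have hp0 : p ≠ 0 := ne_of_gt hppos
  have hpsq : p ^ 2 = α ^ 2 * Real.sin η₀ ^ 2 + β ^ 2 * Real.cos η₀ ^ 2 := by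
    rw [hp, Real.sq_sqrt (by positivity)]
  set a : ℝ := α / p with ha
  set b : ℝ := β / p with hb
  have hunit : a ^ 2 * Real.sin η₀ ^ 2 + b ^ 2 * Real.cos η₀ ^ 2 = 1 := by
    rw [ha, hb]
    field_simp
    linarith [hpsq]
  have hE : Real.cos η₀ ^ 2 + Real.sin η₀ ^ 2 = 1 := Real.cos_sq_add_sin_sq η₀
  set e := (EuclideanSpace.equiv (Fin 4) ℝ : EuclideanSpace ℝ (Fin 4) ≃L[ℝ] (Fin 4 → ℝ)) with he
  have transfer : ∀ (f f' : ℝ → Fin 4 → ℝ) (s : ℝ),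
      (∀ i, HasDerivAt (fun t => f t i) (f' s i) s) →
      HasDerivAt (fun t => (e.symm (f t) : EuclideanSpace ℝ (Fin 4))) (e.symm (f' s)) s := by
    intro f f' s h
    have hf : HasDerivAt f (f' s) s := hasDerivAt_pi.mpr h
    exact (e.symm.toContinuousLinearMap.hasFDerivAt).comp_hasDerivAt s hf
  have hAd : ∀ s : ℝ, HasDerivAt (fun t => α * t / p) a s := by
    intro s
    simpa using ((hasDerivAt_id s).const_mul α).div_const p
  have hBd : ∀ s : ℝ, HasDerivAt (fun t => β * t / p) b s := by
    intro s
    simpa using ((hasDerivAt_id s).const_mul β).div_const p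
  have hγe : γ = fun t => e.symm ![Real.sin η₀ * Real.cos (α * t / p),
      Real.sin η₀ * Real.sin (α * t / p),
      Real.cos η₀ * Real.cos (β * t / p), Real.cos η₀ * Real.sin (β * t / p)] := by
    funext t; rw [← hγ t]; rfl
  have key1 : ∀ s : ℝ, HasDerivAt γ (e.symm
      ![-(Real.sin η₀ * a * Real.sin (α * s / p)),
        Real.sin η₀ * a * Real.cos (α * s / p),
        -(Real.cos η₀ * b * Real.sin (β * s / p)),
        Real.cos η₀ * b * Real.cos (β * s / p)]) s := by
    intro s
    rw [hγe]
    refine transfer _ (fun u => ![-(Real.sin η₀ * a * Real.sin (α * u / p)),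
        Real.sin η₀ * a * Real.cos (α * u / p),
        -(Real.cos η₀ * b * Real.sin (β * u / p)),
        Real.cos η₀ * b * Real.cos (β * u / p)]) s ?_
    intro i
    fin_cases i
    · simpa using (((hAd s).cos).const_mul (Real.sin η₀)).congr_deriv (by ring)
    · simpa using (((hAd s).sin).const_mul (Real.sin η₀)).congr_deriv (by ring)
    · simpa using (((hBd s).cos).const_mul (Real.cos η₀)).congr_deriv (by ring)
    · simpa using (((hBd s).sin).const_mul (Real.cos η₀)).congr_deriv (by ring)
  have hd1 : deriv γ = fun s => e.symm
      ![-(Real.sin η₀ * a * Real.sin (α * s / p)),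
        Real.sin η₀ * a * Real.cos (α * s / p),
        -(Real.cos η₀ * b * Real.sin (β * s / p)),
        Real.cos η₀ * b * Real.cos (β * s / p)] :=
    funext fun s => (key1 s).deriv
  have key2 : ∀ s : ℝ, HasDerivAt (deriv γ) (e.symm
      ![-(Real.sin η₀ * a ^ 2 * Real.cos (α * s / p)),
        -(Real.sin η₀ * a ^ 2 * Real.sin (α * s / p)),
        -(Real.cos η₀ * b ^ 2 * Real.cos (β * s / p)),
        -(Real.cos η₀ * b ^ 2 * Real.sin (β * s / p))]) s := by
    intro s
    rw [hd1]
    refine transfer _ (fun u => ![-(Real.sin η₀ * a ^ 2 * Real.cos (α * u / p)),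
        -(Real.sin η₀ * a ^ 2 * Real.sin (α * u / p)),
        -(Real.cos η₀ * b ^ 2 * Real.cos (β * u / p)),
        -(Real.cos η₀ * b ^ 2 * Real.sin (β * u / p))]) s ?_
    intro i
    fin_cases i
    · simpa using ((((hAd s).sin).const_mul (Real.sin η₀ * a)).fun_neg).congr_deriv (by ring)
    · simpa using (((hAd s).cos).const_mul (Real.sin η₀ * a)).congr_deriv (by ring)
    · simpa using ((((hBd s).sin).const_mul (Real.cos η₀ * b)).fun_neg).congr_deriv (by ring)
    · simpa using (((hBd s).cos).const_mul (Real.cos η₀ * b)).congr_deriv (by ring)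
  have hd2 : deriv (deriv γ) = fun s => e.symm
      ![-(Real.sin η₀ * a ^ 2 * Real.cos (α * s / p)),
        -(Real.sin η₀ * a ^ 2 * Real.sin (α * s / p)),
        -(Real.cos η₀ * b ^ 2 * Real.cos (β * s / p)),
        -(Real.cos η₀ * b ^ 2 * Real.sin (β * s / p))] :=
    funext fun s => (key2 s).deriv
  have hnorm : ∀ v : Fin 4 → ℝ, ‖(e.symm v : EuclideanSpace ℝ (Fin 4))‖
      = Real.sqrt (v 0 ^ 2 + v 1 ^ 2 + v 2 ^ 2 + v 3 ^ 2) := by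
    intro v
    rw [EuclideanSpace.norm_eq]
    simp only [Fin.sum_univ_four, Real.norm_eq_abs, sq_abs]
    rfl
  refine ⟨?_, ?_, ?_⟩
  · intro s
    have hA := Real.cos_sq_add_sin_sq (α * s / p)
    have hB := Real.cos_sq_add_sin_sq (β * s / p)
    rw [hγe]
    simp only
    rw [hnorm]
    simp only [Matrix.cons_val_zero, Matrix.cons_val_one, Matrix.head_cons,
      Matrix.cons_val_two, Matrix.tail_cons, Matrix.cons_val_three]
    rw [show (Real.sin η₀ * Real.cos (α * s / p)) ^ 2 + (Real.sin η₀ * Real.sin (α * s / p)) ^ 2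
        + (Real.cos η₀ * Real.cos (β * s / p)) ^ 2 + (Real.cos η₀ * Real.sin (β * s / p)) ^ 2
        = 1 from by linear_combination Real.sin η₀ ^ 2 * hA + Real.cos η₀ ^ 2 * hB + hE]
    exact Real.sqrt_one
  · intro s
    have hA := Real.cos_sq_add_sin_sq (α * s / p)
    have hB := Real.cos_sq_add_sin_sq (β * s / p)
    rw [hd1]
    simp only
    rw [hnorm]
    simp only [Matrix.cons_val_zero, Matrix.cons_val_one, Matrix.head_cons,
      Matrix.cons_val_two, Matrix.tail_cons, Matrix.cons_val_three]
    rw [show (-(Real.sin η₀ * a * Real.sin (α * s / p))) ^ 2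
        + (Real.sin η₀ * a * Real.cos (α * s / p)) ^ 2
        + (-(Real.cos η₀ * b * Real.sin (β * s / p))) ^ 2
        + (Real.cos η₀ * b * Real.cos (β * s / p)) ^ 2 = 1 from by
      linear_combination (Real.sin η₀ * a) ^ 2 * hA + (Real.cos η₀ * b) ^ 2 * hB + hunit]
    exact Real.sqrt_one
  · intro s
    have hA := Real.cos_sq_add_sin_sq (α * s / p)
    have hB := Real.cos_sq_add_sin_sq (β * s / p)
    rw [hd2, hγe]
    simp only
    rw [← map_add, hnorm]
    simp only [Pi.add_apply, Matrix.cons_val_zero, Matrix.cons_val_one, Matrix.head_cons,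
      Matrix.cons_val_two, Matrix.tail_cons, Matrix.cons_val_three]
    have h1 : 1 - a ^ 2 = (b ^ 2 - a ^ 2) * Real.cos η₀ ^ 2 := by
      linear_combination -hunit + a ^ 2 * hE
    have h2 : 1 - b ^ 2 = (a ^ 2 - b ^ 2) * Real.sin η₀ ^ 2 := by
      linear_combination -hunit + b ^ 2 * hE
    have k1 : Real.sin η₀ ^ 2 * (1 - a ^ 2) ^ 2 + Real.cos η₀ ^ 2 * (1 - b ^ 2) ^ 2
        = (a ^ 2 - b ^ 2) ^ 2 * Real.sin η₀ ^ 2 * Real.cos η₀ ^ 2 := by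
      rw [h1, h2]
      linear_combination ((a ^ 2 - b ^ 2) ^ 2 * Real.sin η₀ ^ 2 * Real.cos η₀ ^ 2) * hE
    rw [show (-(Real.sin η₀ * a ^ 2 * Real.cos (α * s / p))
          + Real.sin η₀ * Real.cos (α * s / p)) ^ 2
        + (-(Real.sin η₀ * a ^ 2 * Real.sin (α * s / p))
          + Real.sin η₀ * Real.sin (α * s / p)) ^ 2
        + (-(Real.cos η₀ * b ^ 2 * Real.cos (β * s / p))
          + Real.cos η₀ * Real.cos (β * s / p)) ^ 2
        + (-(Real.cos η₀ * b ^ 2 * Real.sin (β * s / p))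
          + Real.cos η₀ * Real.sin (β * s / p)) ^ 2
        = ((a ^ 2 - b ^ 2) * Real.sin η₀ * Real.cos η₀) ^ 2 from by
      linear_combination (Real.sin η₀ ^ 2 * (1 - a ^ 2) ^ 2) * hA
        + (Real.cos η₀ ^ 2 * (1 - b ^ 2) ^ 2) * hB + k1]
    rw [Real.sqrt_sq_eq_abs, abs_mul, abs_mul, abs_of_pos hs, abs_of_pos hc]
    have hab : |a ^ 2 - b ^ 2| = |α ^ 2 - β ^ 2| / p ^ 2 := by
      rw [show a ^ 2 - b ^ 2 = (α ^ 2 - β ^ 2) / p ^ 2 from by rw [ha, hb]; field_simp,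
        abs_div, abs_of_pos (pow_pos hppos 2)]
    rw [hab]
    ring
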